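/- There exist a constant c > 0 and N ∈ ℕ such that for every n ≥ N and every deterministic mechanism M mapping reported profiles of unit-range valuations to matchings that admits a pure Nash equilibrium at every true profile of unit-range valuations, there exist a unit-range valuation profile w and a pure Nash equilibrium s of M at w with SW_OPT(w) ≥ c·n·SW_M(w,s); i.e., the pure Price of Anarchy of every such deterministic mechanism is Ω(n) under the unit-range representation. -/

import Mathlib

/-- A unit-sum valuation over `n` items. -/
def UnitSum {n : ℕ} (v : Fin n → ℝ) : Prop :=
  (∀ j, 0 ≤ v j) ∧ ∑ j, v j = 1

/-- A unit-range valuation over `n` items. -/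
def UnitRange {n : ℕ} (v : Fin n → ℝ) : Prop :=
  (∀ j, 0 ≤ v j ∧ v j ≤ 1) ∧ (∃ j, v j = 1) ∧ (∃ j, v j = 0)

/-- The optimal social welfare: the maximum over matchings (permutations of the
items) of the total utility. -/
noncomputable def SWopt {n : ℕ} (u : Fin n → Fin n → ℝ) : ℝ :=
  Finset.univ.sup' ⟨Equiv.refl (Fin n), Finset.mem_univ _⟩
    (fun μ : Equiv.Perm (Fin n) => ∑ i, u i (μ i))

/-- `s` is a pure Nash equilibrium of the deterministic mechanism `M` at true
valuation profile `u`: every report is a unit-range valuation and no agent can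
strictly increase her utility by unilaterally changing her report to another
unit-range valuation. -/
def DetNashUR {n : ℕ} (M : (Fin n → Fin n → ℝ) → Equiv.Perm (Fin n))
    (u s : Fin n → Fin n → ℝ) : Prop :=
  (∀ i, UnitRange (s i)) ∧
    ∀ (i : Fin n) (s' : Fin n → ℝ), UnitRange s' →
      u i (M (Function.update s i s') i) ≤ u i (M s i)

/-- Under the unit-range representation, the pure Price of Anarchy of every
deterministic mechanism that always admits a pure Nash equilibrium is `Ω(n)`:
there are `c > 0` and `N` such that for every `n ≥ N` and every such mechanism
`M`, there are a unit-range profile `w` and a pure Nash equilibrium `s` of `M`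
at `w` with `SW_OPT(w) ≥ c · n · SW_M(w, s)`. -/
theorem deterministic_unit_range_poa_lower :
    ∃ c : ℝ, 0 < c ∧ ∃ N : ℕ,
      ∀ n : ℕ, N ≤ n →
        ∀ M : (Fin n → Fin n → ℝ) → Equiv.Perm (Fin n),
          (∀ u : Fin n → Fin n → ℝ, (∀ i, UnitRange (u i)) → ∃ s, DetNashUR M u s) →
          ∃ (w s : Fin n → Fin n → ℝ), (∀ i, UnitRange (w i)) ∧ DetNashUR M w s ∧
            c * n * ∑ i, w i (M s i) ≤ SWopt w := by
  refine ⟨1/2, by norm_num, 2, ?_⟩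
  intro n hn M hM
  obtain ⟨m, rfl⟩ : ∃ m, n = m + 2 := ⟨n - 2, by omega⟩
  -- common strictly decreasing unit-range valuation
  have hm1 : (0 : ℝ) < (m : ℝ) + 1 := by positivity
  set v : Fin (m + 2) → ℝ := fun j => 1 - (j : ℝ) / (m + 1) with hv
  have hvdef : ∀ j : Fin (m + 2), v j = 1 - (j : ℝ) / (m + 1) := fun _ => rfl
  have hvUR : UnitRange v := by
    refine ⟨fun j => ⟨?_, ?_⟩, ⟨0, ?_⟩, ⟨⟨m + 1, by omega⟩, ?_⟩⟩
    · have hj : (j : ℝ) ≤ (m : ℝ) + 1 := by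
        have := j.isLt; exact_mod_cast by push_cast; exact_mod_cast Nat.lt_succ_iff.mp (by omega)
      have hd : (j : ℝ) / (m + 1) ≤ 1 := by rw [div_le_one hm1]; exact hj
      rw [hvdef]; linarith
    · have hd : 0 ≤ (j : ℝ) / (m + 1) := by positivity
      rw [hvdef]; linarith
    · rw [hvdef]; norm_num
    · rw [hvdef]
      have : ((⟨m + 1, by omega⟩ : Fin (m + 2)) : ℝ) = (m : ℝ) + 1 := by push_cast; rfl
      rw [this, div_self (ne_of_gt hm1)]; ring
  obtain ⟨s, hsUR, hsNash⟩ := hM (fun _ => v) (fun _ => hvUR)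
  -- key: any item reachable by a unilateral deviation has index ≥ the assigned item's
  have key : ∀ (i : Fin (m + 2)) (s' : Fin (m + 2) → ℝ), UnitRange s' →
      (M s i : ℕ) ≤ (M (Function.update s i s') i : ℕ) := by
    intro i s' hs'
    have h := hsNash i s' hs'
    simp only [hvdef] at h
    have h3 : ((M s i : ℕ) : ℝ) / (m + 1) ≤ ((M (Function.update s i s') i : ℕ) : ℝ) / (m + 1) := by
      linarith
    rw [div_le_div_iff₀ hm1 hm1] at h3
    exact_mod_cast le_of_mul_le_mul_right h3 hm1
  -- true profile: agent i values only item (M s i) - 1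
  set w : Fin (m + 2) → Fin (m + 2) → ℝ :=
    fun i j => if (j : ℕ) = (M s i : ℕ) - 1 then 1 else 0 with hwset
  have hw : ∀ i j, w i j = if (j : ℕ) = (M s i : ℕ) - 1 then 1 else 0 := fun _ _ => rfl
  have hwUR : ∀ i, UnitRange (w i) := by
    intro i
    refine ⟨fun j => by rw [hw]; split <;> norm_num, ?_, ?_⟩
    · refine ⟨⟨(M s i : ℕ) - 1, by have := (M s i).isLt; omega⟩, ?_⟩
      rw [hw, if_pos rfl]
    · by_cases hc : (M s i : ℕ) - 1 = 0
      · refine ⟨⟨1, by omega⟩, ?_⟩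
        rw [hw, if_neg (by simp [hc])]
      · refine ⟨⟨0, by omega⟩, ?_⟩
        rw [hw, if_neg (by simpa using Ne.symm hc)]
  have hwub : ∀ i j, w i j ≤ 1 := by
    intro i j; rw [hw]; split <;> norm_num
  have hNash : DetNashUR M w s := by
    refine ⟨hsUR, ?_⟩
    intro i s' hs'
    by_cases hb : (M s i : ℕ) = 0
    · have h1 : w i (M s i) = 1 := by rw [hw, if_pos (by omega)]
      rw [h1]; exact hwub i _
    · have h1 : w i (M s i) = 0 := by rw [hw, if_neg (by omega)]
      have h2 : w i (M (Function.update s i s') i) = 0 := by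
        have := key i s' hs'
        rw [hw, if_neg (by omega)]
      rw [h1, h2]
  -- equilibrium welfare is exactly 1
  have hSW : ∑ i, w i (M s i) = 1 := by
    have hre : ∀ i, w i (M s i) = (fun k : Fin (m+2) => if k = 0 then (1:ℝ) else 0) (M s i) := by
      intro i
      rw [hw]
      by_cases hb : (M s i : ℕ) = 0
      · rw [if_pos (by omega)]
        simp only []
        rw [if_pos (by ext; simpa using hb)]
      · rw [if_neg (by omega)]
        simp only []
        rw [if_neg (by intro h; apply hb; rw [h]; simp)]
    rw [Finset.sum_congr rfl (fun i _ => hre i),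
      Equiv.sum_comp (M s) (fun k : Fin (m+2) => if k = 0 then (1:ℝ) else 0)]
    simp
  -- the shifted matching achieves welfare m+1
  set σ : Equiv.Perm (Fin (m + 2)) := (M s).trans (Equiv.subRight 1) with hσ
  have hopt : ((m : ℝ) + 1) ≤ SWopt w := by
    have hle := Finset.le_sup'
      (fun μ : Equiv.Perm (Fin (m + 2)) => ∑ i, w i (μ i)) (Finset.mem_univ σ)
    have hσv : ∀ i, σ i = M s i - 1 := fun i => rfl
    have hre : ∀ i, w i (σ i) =
        (fun k : Fin (m+2) => if k = 0 then (0:ℝ) else 1) (M s i) := by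
      intro i
      rw [hσv i, hw]
      simp only []
      by_cases hb : M s i = 0
      · rw [if_pos hb, hb]
        rw [if_neg ?_]
        rw [Fin.coe_sub_one, if_pos rfl]
        simp
      · rw [if_neg hb, if_pos ?_]
        rw [Fin.coe_sub_one, if_neg hb]
    have hsum : ∑ i, w i (σ i) = (m : ℝ) + 1 := by
      rw [Finset.sum_congr rfl (fun i _ => hre i),
        Equiv.sum_comp (M s) (fun k : Fin (m+2) => if k = 0 then (0:ℝ) else 1)]
      have hch : ∀ k : Fin (m+2), (if k = 0 then (0:ℝ) else 1) = 1 - (if k = 0 then 1 else 0) := by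
        intro k; split <;> norm_num
      rw [Finset.sum_congr rfl (fun k _ => hch k), Finset.sum_sub_distrib]
      simp
      push_cast
      ring
    calc ((m : ℝ) + 1) = ∑ i, w i (σ i) := hsum.symm
      _ ≤ SWopt w := hle
  refine ⟨w, s, hwUR, hNash, ?_⟩
  rw [hSW]
  push_cast
  linarith
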